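/- Let A ∈ M_n(ℂ) be a diagonal matrix and E ∈ M_n(ℂ), and let ‖·‖ be a matrix norm induced by an absolute norm on ℂ^n. If λ̂ is an eigenvalue of A + E, then there exists a diagonal entry λ of A such that |λ̂ - λ| ≤ ‖E‖. -/

import Mathlib

section Aux

variable {n : ℕ} (ν : (Fin n → ℂ) → ℝ)
variable (hν_zero : ν 0 = 0)
variable (hν_add : ∀ x y, ν (x + y) ≤ ν x + ν y)
variable (hν_smul : ∀ (c : ℂ) x, ν (c • x) = ‖c‖ * ν x)
variable (hν_abs : ∀ x y, (∀ i, ‖x i‖ = ‖y i‖) → ν x = ν y)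

include hν_abs in
lemma aux_neg (x : Fin n → ℂ) : ν (-x) = ν x := by
  apply hν_abs; intro i; simp

include hν_zero hν_add hν_abs in
lemma aux_nonneg (x : Fin n → ℂ) : 0 ≤ ν x := by
  have h := hν_add x (-x)
  rw [add_neg_cancel, hν_zero, aux_neg ν hν_abs] at h
  linarith

include hν_add hν_smul hν_abs in
lemma aux_update_le (z : Fin n → ℂ) (a : Fin n) (c : ℂ)
    (hc : ‖c‖ ≤ ‖z a‖) :
    ν (Function.update z a c) ≤ ν z := by
  by_cases hz : z a = 0
  · have hc0 : c = 0 := by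
      have := norm_nonneg c
      have : ‖c‖ = 0 := le_antisymm (by simpa [hz] using hc) (norm_nonneg c)
      exact norm_eq_zero.mp this
    rw [hc0, ← hz, Function.update_eq_self]
  · set s : ℝ := ‖c‖ / ‖z a‖ with hs
    have hza : 0 < ‖z a‖ := norm_pos_iff.mpr hz
    have hs0 : 0 ≤ s := div_nonneg (norm_nonneg _) hza.le
    have hs1 : s ≤ 1 := (div_le_one hza).mpr hc
    have habs : ν (Function.update z a c) = ν (Function.update z a ((s : ℂ) * z a)) := by
      apply hν_abs; intro i
      by_cases hi : i = a
      · subst hi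
        simp only [Function.update_self, norm_mul, Complex.norm_real, Real.norm_eq_abs, abs_of_nonneg hs0, hs, abs_div, abs_norm]
        field_simp
      · simp [Function.update_of_ne hi]
    rw [habs]
    have hdecomp : Function.update z a ((s : ℂ) * z a)
        = ((((1 + s) / 2 : ℝ) : ℂ)) • z + ((((1 - s) / 2 : ℝ) : ℂ)) • Function.update z a (-z a) := by
      funext i
      by_cases hi : i = a
      · subst hi
        simp only [Function.update_self, Pi.add_apply, Pi.smul_apply, smul_eq_mul]
        push_cast; ring
      · simp only [Function.update_of_ne hi, Pi.add_apply, Pi.smul_apply, smul_eq_mul]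
        push_cast; ring
    rw [hdecomp]
    have h1 : ν (Function.update z a (-z a)) = ν z := by
      apply hν_abs; intro i
      by_cases hi : i = a
      · subst hi; simp
      · simp [Function.update_of_ne hi]
    calc ν _ ≤ ν (((((1 + s) / 2 : ℝ) : ℂ)) • z) + ν (((((1 - s) / 2 : ℝ) : ℂ)) • Function.update z a (-z a)) := hν_add _ _
      _ = ((1 + s) / 2) * ν z + ((1 - s) / 2) * ν z := by
          rw [hν_smul, hν_smul, h1, Complex.norm_real, Complex.norm_real, Real.norm_eq_abs, Real.norm_eq_abs,
            abs_of_nonneg (by linarith), abs_of_nonneg (by linarith)]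
      _ = ν z := by ring

include hν_add hν_smul hν_abs in
lemma aux_mono (x y : Fin n → ℂ) (h : ∀ i, ‖x i‖ ≤ ‖y i‖) :
    ν x ≤ ν y := by
  have key : ∀ s : Finset (Fin n), ∀ x : Fin n → ℂ,
      (∀ i, ‖x i‖ ≤ ‖y i‖) → (∀ i ∉ s, x i = y i) → ν x ≤ ν y := by
    intro s
    induction s using Finset.induction_on with
    | empty =>
        intro x hle heq
        have : x = y := funext fun i => heq i (Finset.notMem_empty i)
        rw [this]
    | @insert a s ha ih =>
        intro x hle heq
        set x' := Function.update x a (y a) with hx'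
        have hle' : ∀ i, ‖x' i‖ ≤ ‖y i‖ := by
          intro i
          by_cases hi : i = a
          · subst hi; simp [hx']
          · simpa [hx', Function.update_of_ne hi] using hle i
        have heq' : ∀ i ∉ s, x' i = y i := by
          intro i hi
          by_cases hia : i = a
          · subst hia; simp [hx']
          · rw [hx', Function.update_of_ne hia]
            exact heq i (by simp [hia, hi])
        have h1 : ν x' ≤ ν y := ih x' hle' heq'
        have h2 : ν x ≤ ν x' := by
          have hx : x = Function.update x' a (x a) := by
            funext i
            by_cases hi : i = a
            · subst hi; simp
            · simp [hx', Function.update_of_ne hi]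
          rw [hx]
          apply aux_update_le ν hν_add hν_smul hν_abs
          simpa [hx'] using hle a
        linarith
  exact key Finset.univ x h (fun i hi => absurd (Finset.mem_univ i) hi)

include hν_zero hν_add in
lemma aux_sum_le {ι : Type*} [DecidableEq ι] (s : Finset ι) (f : ι → (Fin n → ℂ)) :
    ν (∑ j ∈ s, f j) ≤ ∑ j ∈ s, ν (f j) := by
  induction s using Finset.induction_on with
  | empty => simp [hν_zero]
  | @insert a s ha ih =>
      rw [Finset.sum_insert ha, Finset.sum_insert ha]
      exact le_trans (hν_add _ _) (by linarith)

end Aux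

/-- Bauer–Fike for a diagonal matrix: Let `A = diag(d)` be a diagonal
matrix, `E` any matrix, and `‖·‖` (here `N`) the matrix norm induced by an absolute norm
`ν` on `ℂⁿ`.  If `λ̂` is an eigenvalue of `A + E`, then some diagonal entry `dᵢ`
satisfies `|λ̂ - dᵢ| ≤ N E`. -/
theorem stmt_9 (n : ℕ) (d : Fin n → ℂ) (E : Matrix (Fin n) (Fin n) ℂ)
    -- ν is an absolute norm on ℂⁿ:
    (ν : (Fin n → ℂ) → ℝ)
    (hν_pos : ∀ x, x ≠ 0 → 0 < ν x) (hν_zero : ν 0 = 0)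
    (hν_add : ∀ x y, ν (x + y) ≤ ν x + ν y)
    (hν_smul : ∀ (c : ℂ) x, ν (c • x) = ‖c‖ * ν x)
    (hν_abs : ∀ x y, (∀ i, ‖x i‖ = ‖y i‖) → ν x = ν y)
    -- N is the matrix norm induced by ν:
    (N : Matrix (Fin n) (Fin n) ℂ → ℝ)
    (hN : ∀ M, N M = sSup {r : ℝ | ∃ x, ν x = 1 ∧ r = ν (M.mulVec x)})
    (lamHat : ℂ) (v : Fin n → ℂ) (hv : v ≠ 0)
    (heig : (Matrix.diagonal d + E).mulVec v = lamHat • v) :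
    ∃ i, ‖lamHat - d i‖ ≤ N E := by
  -- n ≠ 0
  rcases Nat.eq_zero_or_pos n with hn | hn
  · exact absurd (funext fun i => absurd (i.2.trans_le hn.le) (Nat.not_lt_zero _)) hv
  haveI : NeZero n := ⟨hn.ne'⟩
  -- E v = u where u i = (lamHat - d i) * v i
  have hEv : E.mulVec v = fun i => (lamHat - d i) * v i := by
    funext i
    have := congrFun heig i
    rw [Matrix.add_mulVec] at this
    simp only [Pi.add_apply, Matrix.mulVec_diagonal, Pi.smul_apply, smul_eq_mul] at this
    linear_combination this
  -- pick i₀ minimizing |lamHat - d i|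
  obtain ⟨i₀, -, hi₀⟩ := Finset.exists_min_image Finset.univ
    (fun i => ‖lamHat - d i‖) ⟨⟨0, hn⟩, Finset.mem_univ _⟩
  refine ⟨i₀, ?_⟩
  have hνv : 0 < ν v := hν_pos v hv
  -- key estimate
  have hkey : ‖lamHat - d i₀‖ * ν v ≤ ν (E.mulVec v) := by
    have h1 : ν ((lamHat - d i₀) • v) ≤ ν (E.mulVec v) := by
      apply aux_mono ν hν_add hν_smul hν_abs
      intro i
      rw [hEv]
      simp only [Pi.smul_apply, smul_eq_mul, norm_mul]
      exact mul_le_mul_of_nonneg_right (hi₀ i (Finset.mem_univ i)) (norm_nonneg _)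
    rwa [hν_smul] at h1
  -- bounded above
  set S := {r : ℝ | ∃ x, ν x = 1 ∧ r = ν (E.mulVec x)} with hS
  have hbdd : BddAbove S := by
    set e : Fin n → (Fin n → ℂ) := fun j => Pi.single j 1 with he
    have hejpos : ∀ j, 0 < ν (e j) := by
      intro j
      apply hν_pos
      intro h
      have := congrFun h j
      simp [he] at this
    have hcomp : ∀ (x : Fin n → ℂ) (j : Fin n), ‖x j‖ * ν (e j) ≤ ν x := by
      intro x j
      have : ν (x j • e j) ≤ ν x := by
        apply aux_mono ν hν_add hν_smul hν_abs
        intro i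
        by_cases hi : i = j
        · subst hi; simp [he]
        · simp [he, Pi.single_apply, hi, norm_nonneg]
      rwa [hν_smul] at this
    refine ⟨∑ j, (ν (e j))⁻¹ * ν (fun i => E i j), ?_⟩
    rintro r ⟨x, hx1, rfl⟩
    have hdec : E.mulVec x = ∑ j, x j • (fun i => E i j) := by
      funext i
      simp only [Matrix.mulVec, dotProduct, Finset.sum_apply, Pi.smul_apply,
        smul_eq_mul]
      exact Finset.sum_congr rfl fun j _ => mul_comm _ _
    calc ν (E.mulVec x) ≤ ∑ j, ν (x j • (fun i => E i j)) := by
          rw [hdec]; exact aux_sum_le ν hν_zero hν_add _ _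
      _ ≤ ∑ j, (ν (e j))⁻¹ * ν (fun i => E i j) := by
          apply Finset.sum_le_sum
          intro j _
          rw [hν_smul]
          have h1 : ‖x j‖ ≤ (ν (e j))⁻¹ := by
            rw [inv_eq_one_div, le_div_iff₀ (hejpos j)]
            calc ‖x j‖ * ν (e j) ≤ ν x := hcomp x j
              _ = 1 := hx1
          exact mul_le_mul_of_nonneg_right h1
            (aux_nonneg ν hν_zero hν_add hν_abs _)
  -- the element of S
  have hmem : ν (E.mulVec (((ν v : ℝ) : ℂ)⁻¹ • v)) ∈ S := by
    refine ⟨((ν v : ℝ) : ℂ)⁻¹ • v, ?_, rfl⟩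
    rw [hν_smul, norm_inv, Complex.norm_real, Real.norm_eq_abs, abs_of_pos hνv, inv_mul_cancel₀ hνv.ne']
  have hle := le_csSup hbdd hmem
  rw [hN]
  refine le_trans ?_ hle
  rw [Matrix.mulVec_smul, hν_smul, norm_inv, Complex.norm_real, Real.norm_eq_abs, abs_of_pos hνv]
  rw [← le_div_iff₀ hνv] at hkey
  simpa [div_eq_inv_mul] using hkey
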